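/- Let Ŵ_0 = ∑_{k≥1} k t_k L̂_k where L̂_k are the Virasoro operators, and F̂_1 = L̂_{-1} = ∑_{k≥1} k t_k ∂/∂t_{k-1}. Then F̂_2 := [½Ŵ_0, F̂_1] equals ∑_{k≥1} k t_k L̂_{k-1}. -/

import Mathlib

open MvPolynomial
abbrev MP := MvPolynomial ℕ ℝ

lemma pderiv_comm' (i j : ℕ) (P : MP) :
    pderiv i (pderiv j P) = pderiv j (pderiv i P) := by
  induction P using MvPolynomial.induction_on' with
  | monomial s a =>
    simp only [pderiv_monomial]
    rcases eq_or_ne i j with rfl | hij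
    · rfl
    · congr 1
      · rw [tsub_tsub, tsub_tsub, add_comm]
      · simp only [Finsupp.tsub_apply, Finsupp.single_apply]
        simp [hij, hij.symm]
        ring
  | add p q hp hq => simp [hp, hq]

/-- `Bnd R N`: all partial derivatives with index `≥ N` vanish. -/
def Bnd (R : MP) (N : ℕ) : Prop := ∀ m, N ≤ m → pderiv m R = 0

lemma Bnd.mono {R : MP} {N N' : ℕ} (h : Bnd R N) (hN : N ≤ N') : Bnd R N' :=
  fun m hm => h m (hN.trans hm)

lemma bnd_vars (P : MP) : Bnd P (P.vars.sup id + 1) := by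
  intro m hm
  apply pderiv_eq_zero_of_notMem_vars
  intro hmem
  have := Finset.le_sup (f := id) hmem
  simp only [id] at this
  omega

lemma Bnd.zero (N : ℕ) : Bnd (0 : MP) N := fun m _ => by simp

lemma Bnd.add {R S : MP} {N : ℕ} (hR : Bnd R N) (hS : Bnd S N) : Bnd (R + S) N :=
  fun m hm => by simp [hR m hm, hS m hm]

lemma Bnd.smul {R : MP} {N : ℕ} (c : ℝ) (hR : Bnd R N) : Bnd (c • R) N :=
  fun m hm => by simp [hR m hm]

lemma Bnd.pderiv {R : MP} {N : ℕ} (i : ℕ) (hR : Bnd R N) : Bnd (pderiv i R) N :=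
  fun m hm => by rw [pderiv_comm', hR m hm, map_zero]

lemma Bnd.X_mul {R : MP} {N k : ℕ} (hR : Bnd R N) : Bnd (X k * R) (max (k + 1) N) := by
  intro m hm
  rw [pderiv_mul, hR m (le_trans (le_max_right _ _) hm),
    pderiv_X_of_ne (by omega), mul_zero, zero_mul, zero_add]

lemma Bnd.sum {ι : Type*} {s : Finset ι} {f : ι → MP} {N : ℕ}
    (h : ∀ i ∈ s, Bnd (f i) N) : Bnd (∑ i ∈ s, f i) N := by
  intro m hm
  rw [map_sum]
  exact Finset.sum_eq_zero fun i hi => h i hi m hm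

/-- The Virasoro operator `L̂_n` acting on polynomials in `t_0, t_1, ...` (for `n ≥ -1`). -/
noncomputable def Lop (n : ℤ) (P : MvPolynomial ℕ ℝ) : MvPolynomial ℕ ℝ :=
  (∑ᶠ k : ℕ, if 1 ≤ k then (k : ℝ) • (X k * pderiv (((k : ℤ) + n).toNat) P) else 0) +
    ∑ k ∈ Finset.range ((n + 1).toNat), pderiv k (pderiv (n.toNat - k) P)

/-- `Ŵ_0 = ∑_{k≥1} k t_k L̂_k`. -/
noncomputable def W0op (P : MvPolynomial ℕ ℝ) : MvPolynomial ℕ ℝ :=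
  ∑ᶠ k : ℕ, if 1 ≤ k then (k : ℝ) • (X k * Lop k P) else 0

lemma Lop_eq_sum (n : ℤ) (hn : -1 ≤ n) {R : MP} {N : ℕ} (hB : Bnd R N) {M : ℕ}
    (hM : N + 1 ≤ M) :
    Lop n R =
      (∑ k ∈ Finset.range M,
          if 1 ≤ k then (k : ℝ) • (X k * pderiv (((k : ℤ) + n).toNat) R) else 0) +
        ∑ k ∈ Finset.range ((n + 1).toNat), pderiv k (pderiv (n.toNat - k) R) := by
  unfold Lop
  congr 1
  apply finsum_eq_finset_sum_of_support_subset
  rw [Function.support_subset_iff']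
  intro k hk
  simp only [Finset.coe_range, Set.mem_Iio, not_lt] at hk
  have h1 : 1 ≤ k := by omega
  have h2 : pderiv (((k : ℤ) + n).toNat) R = 0 := by apply hB; omega
  rw [if_pos h1, h2, mul_zero, smul_zero]

lemma Lop_nat_zero (n : ℕ) {R : MP} {N : ℕ} (hB : Bnd R N) (hn : 2 * N ≤ n) :
    Lop (n : ℤ) R = 0 := by
  rw [Lop_eq_sum (n : ℤ) (by omega) hB (M := N + 1) le_rfl]
  have e1 : ((n : ℤ) + 1).toNat = n + 1 := by omega
  have e2 : (n : ℤ).toNat = n := by omega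
  rw [e1, e2]
  rw [Finset.sum_eq_zero, Finset.sum_eq_zero, add_zero]
  · intro k hk
    simp only [Finset.mem_range] at hk
    rcases le_or_gt N k with h | h
    · rw [pderiv_comm', hB k h, map_zero]
    · rw [hB (n - k) (by omega), map_zero]
  · intro k _
    rcases le_or_gt 1 k with h | h
    · rw [if_pos h, hB (((k : ℤ) + n).toNat) (by omega), mul_zero, smul_zero]
    · rw [if_neg (by omega)]

lemma Bnd.lop {n : ℤ} (hn : -1 ≤ n) {R : MP} {N : ℕ} (hB : Bnd R N) :
    Bnd (Lop n R) (N + 1) := by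
  rw [Lop_eq_sum n hn hB (M := N + 1) le_rfl]
  apply Bnd.add
  · apply Bnd.sum
    intro k hk
    simp only [Finset.mem_range] at hk
    rcases le_or_gt 1 k with h | h
    · rw [if_pos h]
      exact ((hB.pderiv _).X_mul.smul _).mono (by omega)
    · rw [if_neg (by omega)]
      exact Bnd.zero _
  · exact Bnd.sum fun k _ => ((hB.pderiv _).pderiv _).mono (by omega)

lemma W0op_eq_sum {Q : MP} {N : ℕ} (hB : Bnd Q N) {M : ℕ} (hM : 2 * N ≤ M) :
    W0op Q = ∑ k ∈ Finset.range M, if 1 ≤ k then (k : ℝ) • (X k * Lop k Q) else 0 := by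
  unfold W0op
  apply finsum_eq_finset_sum_of_support_subset
  rw [Function.support_subset_iff']
  intro k hk
  simp only [Finset.coe_range, Set.mem_Iio, not_lt] at hk
  rcases le_or_gt 1 k with h | h
  · rw [if_pos h, Lop_nat_zero k hB (by omega), mul_zero, smul_zero]
  · rw [if_neg (by omega)]

lemma Bnd.w0op {Q : MP} {N : ℕ} (hB : Bnd Q N) : Bnd (W0op Q) (2 * N + 1) := by
  rw [W0op_eq_sum hB (M := 2 * N) le_rfl]
  apply Bnd.sum
  intro k hk
  simp only [Finset.mem_range] at hk
  rcases le_or_gt 1 k with h | h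
  · rw [if_pos h]
    exact (((hB.lop (by omega)).X_mul).smul _).mono (by omega)
  · rw [if_neg (by omega)]
    exact Bnd.zero _

lemma sum_shift (n : ℕ) (g : ℕ → MP) (hg : g 0 = 0) :
    (∑ k ∈ Finset.range (n + 1), g k) = ∑ m ∈ Finset.range n, g (m + 1) := by
  rw [Finset.sum_range_succ', hg, add_zero]

lemma pderiv_X_mul (m l : ℕ) (Q : MP) :
    pderiv m (X l * Q) = (if m = l then Q else 0) + X l * pderiv m Q := by
  rw [pderiv_mul]
  congr 1
  rcases eq_or_ne m l with rfl | h
  · simp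
  · rw [pderiv_X_of_ne (Ne.symm h), if_neg h, zero_mul]

lemma Lop_neg_one_eq {R : MP} {N : ℕ} (hB : Bnd R N) {M : ℕ} (hM : N + 1 ≤ M) :
    Lop (-1) R = ∑ k ∈ Finset.range M,
      if 1 ≤ k then (k : ℝ) • (X k * pderiv (k - 1) R) else 0 := by
  rw [Lop_eq_sum (-1) le_rfl hB hM]
  simp only [show ((-1 : ℤ) + 1).toNat = 0 from rfl, Finset.range_zero, Finset.sum_empty,
    add_zero]
  apply Finset.sum_congr rfl
  intro k _
  rcases le_or_gt 1 k with h | h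
  · rw [if_pos h, if_pos h, show (((k : ℤ)) + -1).toNat = k - 1 by omega]
  · rw [if_neg (by omega), if_neg (by omega)]

lemma Lop_neg_one_eq' {R : MP} {N : ℕ} (hB : Bnd R N) {M : ℕ} (hM : N ≤ M) :
    Lop (-1) R = ∑ m ∈ Finset.range M, ((m + 1 : ℕ) : ℝ) • (X (m + 1) * pderiv m R) := by
  rw [Lop_neg_one_eq hB (M := M + 1) (by omega), sum_shift _ _ (by simp)]
  apply Finset.sum_congr rfl
  intro m _
  rw [if_pos (by omega), Nat.add_sub_cancel]

lemma Lop_neg_one_zero : Lop (-1) (0 : MP) = 0 := by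
  rw [Lop_neg_one_eq (Bnd.zero 0) (M := 1) le_rfl]
  simp

lemma Lop_neg_one_add {Q R : MP} {N : ℕ} (hQ : Bnd Q N) (hR : Bnd R N) :
    Lop (-1) (Q + R) = Lop (-1) Q + Lop (-1) R := by
  rw [Lop_neg_one_eq (hQ.add hR) (M := N + 1) le_rfl, Lop_neg_one_eq hQ (M := N + 1) le_rfl,
    Lop_neg_one_eq hR (M := N + 1) le_rfl, ← Finset.sum_add_distrib]
  apply Finset.sum_congr rfl
  intro k _
  rcases le_or_gt 1 k with h | h
  · simp only [if_pos h, map_add, mul_add, smul_add]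
  · simp [if_neg (by omega : ¬ 1 ≤ k)]

lemma Lop_neg_one_smul {Q : MP} {N : ℕ} (hQ : Bnd Q N) (c : ℝ) :
    Lop (-1) (c • Q) = c • Lop (-1) Q := by
  rw [Lop_neg_one_eq (hQ.smul c) (M := N + 1) le_rfl, Lop_neg_one_eq hQ (M := N + 1) le_rfl,
    Finset.smul_sum]
  apply Finset.sum_congr rfl
  intro k _
  rcases le_or_gt 1 k with h | h
  · rw [if_pos h, if_pos h, Derivation.map_smul, mul_smul_comm, smul_comm]
  · simp [if_neg (by omega : ¬ 1 ≤ k)]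

lemma Lop_neg_one_sum {ι : Type*} {s : Finset ι} {f : ι → MP} {N : ℕ}
    (h : ∀ i ∈ s, Bnd (f i) N) :
    Lop (-1) (∑ i ∈ s, f i) = ∑ i ∈ s, Lop (-1) (f i) := by
  classical
  induction s using Finset.induction_on with
  | empty => simpa using Lop_neg_one_zero
  | insert _ _ hx ih =>
    rename_i a s
    rw [Finset.sum_insert hx, Finset.sum_insert hx,
      Lop_neg_one_add (h a (Finset.mem_insert_self a s))
        (Bnd.sum fun i hi => h i (Finset.mem_insert_of_mem hi)),
      ih fun i hi => h i (Finset.mem_insert_of_mem hi)]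

lemma Lop_neg_one_X_mul {Q : MP} {N : ℕ} (hB : Bnd Q N) (k : ℕ) :
    Lop (-1) (X (k + 1) * Q) =
      ((k + 2 : ℕ) : ℝ) • (X (k + 2) * Q) + X (k + 1) * Lop (-1) Q := by
  have hXQ : Bnd (X (k + 1) * Q) (max (k + 2) N) := hB.X_mul
  set M := max (k + 2) N + 1 with hMdef
  rw [Lop_neg_one_eq hXQ (M := M) le_rfl,
    Lop_neg_one_eq hB (M := M) (by omega)]
  have expand : ∀ m ∈ Finset.range M,
      (if 1 ≤ m then (m : ℝ) • (X m * pderiv (m - 1) (X (k + 1) * Q)) else 0) =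
        (if 1 ≤ m then (m : ℝ) • (X m * ((if m - 1 = k + 1 then Q else 0))) else 0) +
          (if 1 ≤ m then (m : ℝ) • (X m * (X (k + 1) * pderiv (m - 1) Q)) else 0) := by
    intro m _
    rcases le_or_gt 1 m with h | h
    · simp only [if_pos h, pderiv_X_mul, mul_add, smul_add]
    · simp [if_neg (by omega : ¬ 1 ≤ m)]
  rw [Finset.sum_congr rfl expand, Finset.sum_add_distrib]
  congr 1
  · -- delta part collapses to the (k+2) term
    rw [Finset.sum_eq_single (k + 2)]
    · rw [if_pos (by omega : 1 ≤ k + 2), show k + 2 - 1 = k + 1 from by omega, if_pos rfl]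
    · intro b _ hb
      rcases le_or_gt 1 b with h | h
      · rw [if_pos h, if_neg (by omega), mul_zero, smul_zero]
      · rw [if_neg (by omega)]
    · intro habs
      exact absurd (Finset.mem_range.mpr (by omega)) habs
  · rw [Finset.mul_sum]
    apply Finset.sum_congr rfl
    intro m _
    rcases le_or_gt 1 m with h | h
    · rw [if_pos h, if_pos h, mul_smul_comm]
      ring_nf
    · simp [if_neg (by omega : ¬ 1 ≤ m)]

lemma Lop_nat_eq' (n : ℕ) {R : MP} {N : ℕ} (hB : Bnd R N) {M : ℕ} (hM : N ≤ M) :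
    Lop (n : ℤ) R =
      (∑ m ∈ Finset.range M, ((m + 1 : ℕ) : ℝ) • (X (m + 1) * pderiv (m + 1 + n) R)) +
        ∑ i ∈ Finset.range (n + 1), pderiv i (pderiv (n - i) R) := by
  rw [Lop_eq_sum n (by omega) hB (M := M + 1) (by omega)]
  congr 1
  · rw [sum_shift _ _ (by simp)]
    apply Finset.sum_congr rfl
    intro m _
    rw [if_pos (by omega), show ((↑(m + 1) : ℤ) + ↑n).toNat = m + 1 + n by omega]

lemma delta_collapse {E m : ℕ} (g : ℕ → MP) (hg : ∀ l, E ≤ l → g l = 0) :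
    (∑ l ∈ Finset.range E, if m = l + 1 then ((l + 1 : ℕ) : ℝ) • g l else 0)
      = (m : ℝ) • g (m - 1) := by
  cases m with
  | zero =>
    simp only [Nat.cast_zero, zero_smul]
    exact Finset.sum_eq_zero (fun l _ => if_neg (by omega))
  | succ m' =>
    have h1 : ∀ l ∈ Finset.range E,
        (if m' + 1 = l + 1 then ((l + 1 : ℕ) : ℝ) • g l else 0)
          = (if l = m' then ((l + 1 : ℕ) : ℝ) • g l else 0) := by
      intro l _
      rcases eq_or_ne l m' with rfl | h
      · rw [if_pos rfl, if_pos rfl]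
      · rw [if_neg (by omega), if_neg h]
    rw [Finset.sum_congr rfl h1, Finset.sum_ite_eq' (Finset.range E) m']
    rcases lt_or_ge m' E with h | h
    · rw [if_pos (Finset.mem_range.mpr h)]
      norm_num
    · rw [if_neg (fun hc => absurd (Finset.mem_range.mp hc) (by omega))]
      simp [hg m' (by omega)]

lemma comm_lemma {Q : MP} {N : ℕ} (hB : Bnd Q N) (j : ℕ) :
    Lop ((j + 1 : ℕ) : ℤ) (Lop (-1) Q) - Lop (-1) (Lop ((j + 1 : ℕ) : ℤ) Q)
      = ((j + 2 : ℕ) : ℝ) • Lop ((j : ℕ) : ℤ) Q := by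
  set E := N + 2 with hE
  have hBA : Bnd (Lop (-1) Q) (N + 1) := hB.lop (by omega)
  have hA : Lop (-1) Q =
      ∑ m ∈ Finset.range E, ((m + 1 : ℕ) : ℝ) • (X (m + 1) * pderiv m Q) :=
    Lop_neg_one_eq' hB (by omega)
  -- derivative of `Lop (-1) Q`
  have hDA : ∀ m : ℕ, pderiv m (Lop (-1) Q) =
      (m : ℝ) • pderiv (m - 1) Q +
        ∑ l ∈ Finset.range E, ((l + 1 : ℕ) : ℝ) • (X (l + 1) * pderiv m (pderiv l Q)) := by
    intro m
    rw [hA, map_sum]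
    have step : ∀ l ∈ Finset.range E,
        pderiv m (((l + 1 : ℕ) : ℝ) • (X (l + 1) * pderiv l Q)) =
          (if m = l + 1 then ((l + 1 : ℕ) : ℝ) • pderiv l Q else 0) +
            ((l + 1 : ℕ) : ℝ) • (X (l + 1) * pderiv m (pderiv l Q)) := by
      intro l _
      rw [Derivation.map_smul, pderiv_X_mul, smul_add, smul_ite, smul_zero]
    rw [Finset.sum_congr rfl step, Finset.sum_add_distrib,
      delta_collapse (fun l => pderiv l Q) (fun l hl => hB l (by omega))]
  -- expansion of `Lop (j+1) Q`
  have hL1 : Lop ((j + 1 : ℕ) : ℤ) Q =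
      (∑ m ∈ Finset.range E,
          ((m + 1 : ℕ) : ℝ) • (X (m + 1) * pderiv (m + 1 + (j + 1)) Q)) +
        ∑ i ∈ Finset.range (j + 1 + 1), pderiv i (pderiv (j + 1 - i) Q) :=
    Lop_nat_eq' (j + 1) hB (by omega)
  -- derivative of `Lop (j+1) Q`
  have hDL : ∀ m : ℕ, pderiv m (Lop ((j + 1 : ℕ) : ℤ) Q) =
      (m : ℝ) • pderiv (m - 1 + 1 + (j + 1)) Q +
        (∑ l ∈ Finset.range E,
          ((l + 1 : ℕ) : ℝ) • (X (l + 1) * pderiv m (pderiv (l + 1 + (j + 1)) Q))) +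
        ∑ i ∈ Finset.range (j + 1 + 1), pderiv m (pderiv i (pderiv (j + 1 - i) Q)) := by
    intro m
    rw [hL1, map_add, map_sum, map_sum]
    congr 1
    have step : ∀ l ∈ Finset.range E,
        pderiv m (((l + 1 : ℕ) : ℝ) • (X (l + 1) * pderiv (l + 1 + (j + 1)) Q)) =
          (if m = l + 1 then ((l + 1 : ℕ) : ℝ) • pderiv (l + 1 + (j + 1)) Q else 0) +
            ((l + 1 : ℕ) : ℝ) • (X (l + 1) * pderiv m (pderiv (l + 1 + (j + 1)) Q)) := by
      intro l _
      rw [Derivation.map_smul, pderiv_X_mul, smul_add, smul_ite, smul_zero]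
    rw [Finset.sum_congr rfl step, Finset.sum_add_distrib,
      delta_collapse (fun l => pderiv (l + 1 + (j + 1)) Q) (fun l hl => hB _ (by omega))]
  -- expansion of `Lop (j+1) (Lop (-1) Q)`
  have hE1 : Lop ((j + 1 : ℕ) : ℤ) (Lop (-1) Q) =
      ((∑ k ∈ Finset.range E, ((k + 1 : ℕ) : ℝ) •
          (X (k + 1) * (((k + 1 + (j + 1) : ℕ) : ℝ) • pderiv (k + 1 + (j + 1) - 1) Q))) +
        ∑ k ∈ Finset.range E, ((k + 1 : ℕ) : ℝ) •
          (X (k + 1) * ∑ l ∈ Finset.range E,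
            ((l + 1 : ℕ) : ℝ) • (X (l + 1) * pderiv (k + 1 + (j + 1)) (pderiv l Q)))) +
      ((∑ i ∈ Finset.range (j + 1 + 1),
          ((j + 1 - i : ℕ) : ℝ) • pderiv i (pderiv (j + 1 - i - 1) Q)) +
        (∑ i ∈ Finset.range (j + 1 + 1),
          (i : ℝ) • pderiv (j + 1 - i) (pderiv (i - 1) Q)) +
        ∑ i ∈ Finset.range (j + 1 + 1), ∑ l ∈ Finset.range E,
          ((l + 1 : ℕ) : ℝ) • (X (l + 1) * pderiv i (pderiv (j + 1 - i) (pderiv l Q)))) := by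
    rw [Lop_nat_eq' (j + 1) hBA (by omega : N + 1 ≤ E)]
    congr 1
    · rw [← Finset.sum_add_distrib]
      apply Finset.sum_congr rfl
      intro k _
      rw [hDA (k + 1 + (j + 1)), mul_add, smul_add]
    · rw [← Finset.sum_add_distrib, ← Finset.sum_add_distrib]
      apply Finset.sum_congr rfl
      intro i _
      rw [hDA (j + 1 - i), map_add, Derivation.map_smul, map_sum, add_assoc]
      congr 1
      have step : ∀ l ∈ Finset.range E,
          pderiv i (((l + 1 : ℕ) : ℝ) • (X (l + 1) * pderiv (j + 1 - i) (pderiv l Q))) =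
            (if i = l + 1 then ((l + 1 : ℕ) : ℝ) • pderiv (j + 1 - i) (pderiv l Q) else 0) +
              ((l + 1 : ℕ) : ℝ) •
                (X (l + 1) * pderiv i (pderiv (j + 1 - i) (pderiv l Q))) := by
        intro l _
        rw [Derivation.map_smul, pderiv_X_mul, smul_add, smul_ite, smul_zero]
      rw [Finset.sum_congr rfl step, Finset.sum_add_distrib,
        delta_collapse (fun l => pderiv (j + 1 - i) (pderiv l Q))
          (fun l hl => by
            show pderiv (j + 1 - i) (pderiv l Q) = 0
            rw [hB l (by omega), map_zero])]
  -- expansion of `Lop (-1) (Lop (j+1) Q)`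
  have hE2 : Lop (-1) (Lop ((j + 1 : ℕ) : ℤ) Q) =
      (∑ m ∈ Finset.range E, ((m + 1 : ℕ) : ℝ) •
          (X (m + 1) * ((m : ℝ) • pderiv (m - 1 + 1 + (j + 1)) Q))) +
        (∑ m ∈ Finset.range E, ((m + 1 : ℕ) : ℝ) •
          (X (m + 1) * ∑ l ∈ Finset.range E,
            ((l + 1 : ℕ) : ℝ) • (X (l + 1) * pderiv m (pderiv (l + 1 + (j + 1)) Q)))) +
        ∑ m ∈ Finset.range E, ((m + 1 : ℕ) : ℝ) •
          (X (m + 1) * ∑ i ∈ Finset.range (j + 1 + 1),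
            pderiv m (pderiv i (pderiv (j + 1 - i) Q))) := by
    rw [Lop_neg_one_eq' (hB.lop (by omega : (-1 : ℤ) ≤ (j + 1 : ℕ))) (by omega : N + 1 ≤ E)]
    rw [← Finset.sum_add_distrib, ← Finset.sum_add_distrib]
    apply Finset.sum_congr rfl
    intro m _
    rw [hDL m, mul_add, mul_add, smul_add, smul_add]
  -- expansion of `Lop j Q`
  have hE3 : Lop ((j : ℕ) : ℤ) Q =
      (∑ k ∈ Finset.range E, ((k + 1 : ℕ) : ℝ) • (X (k + 1) * pderiv (k + 1 + j) Q)) +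
        ∑ i ∈ Finset.range (j + 1), pderiv i (pderiv (j - i) Q) :=
    Lop_nat_eq' j hB (by omega)
  rw [hE1, hE2, hE3, smul_add]
  -- claim 1
  have hC1 : (∑ k ∈ Finset.range E, ((k + 1 : ℕ) : ℝ) •
        (X (k + 1) * (((k + 1 + (j + 1) : ℕ) : ℝ) • pderiv (k + 1 + (j + 1) - 1) Q))) -
      (∑ m ∈ Finset.range E, ((m + 1 : ℕ) : ℝ) •
        (X (m + 1) * ((m : ℝ) • pderiv (m - 1 + 1 + (j + 1)) Q))) =
      ((j + 2 : ℕ) : ℝ) •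
        ∑ k ∈ Finset.range E, ((k + 1 : ℕ) : ℝ) • (X (k + 1) * pderiv (k + 1 + j) Q) := by
    have fix : ∀ m : ℕ, ((m : ℝ) • pderiv (m - 1 + 1 + (j + 1)) Q)
        = (m : ℝ) • pderiv (m + 1 + j) Q := by
      intro m
      cases m with
      | zero => norm_num
      | succ m' => rw [show m' + 1 - 1 + 1 + (j + 1) = m' + 1 + 1 + j by omega]
    rw [Finset.smul_sum, ← Finset.sum_sub_distrib]
    apply Finset.sum_congr rfl
    intro k _
    rw [fix k, show k + 1 + (j + 1) - 1 = k + 1 + j by omega]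
    simp only [mul_smul_comm, smul_smul, ← sub_smul]
    congr 1
    push_cast
    ring
  -- claim 2
  have hC2 : (∑ k ∈ Finset.range E, ((k + 1 : ℕ) : ℝ) •
        (X (k + 1) * ∑ l ∈ Finset.range E,
          ((l + 1 : ℕ) : ℝ) • (X (l + 1) * pderiv (k + 1 + (j + 1)) (pderiv l Q)))) =
      ∑ m ∈ Finset.range E, ((m + 1 : ℕ) : ℝ) •
        (X (m + 1) * ∑ l ∈ Finset.range E,
          ((l + 1 : ℕ) : ℝ) • (X (l + 1) * pderiv m (pderiv (l + 1 + (j + 1)) Q))) := by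
    have lhs_eq : ∀ s : Finset ℕ, ∀ k : ℕ, ((k + 1 : ℕ) : ℝ) •
        (X (k + 1) * ∑ l ∈ s, ((l + 1 : ℕ) : ℝ) •
          (X (l + 1) * pderiv (k + 1 + (j + 1)) (pderiv l Q))) =
        ∑ l ∈ s, ((k + 1 : ℕ) : ℝ) • (X (k + 1) * (((l + 1 : ℕ) : ℝ) •
          (X (l + 1) * pderiv (k + 1 + (j + 1)) (pderiv l Q)))) := by
      intro s k
      rw [Finset.mul_sum, Finset.smul_sum]
    have rhs_eq : ∀ s : Finset ℕ, ∀ m : ℕ, ((m + 1 : ℕ) : ℝ) •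
        (X (m + 1) * ∑ l ∈ s, ((l + 1 : ℕ) : ℝ) •
          (X (l + 1) * pderiv m (pderiv (l + 1 + (j + 1)) Q))) =
        ∑ l ∈ s, ((m + 1 : ℕ) : ℝ) • (X (m + 1) * (((l + 1 : ℕ) : ℝ) •
          (X (l + 1) * pderiv m (pderiv (l + 1 + (j + 1)) Q)))) := by
      intro s m
      rw [Finset.mul_sum, Finset.smul_sum]
    rw [Finset.sum_congr rfl (fun k _ => lhs_eq _ k),
      Finset.sum_congr rfl (fun m _ => rhs_eq _ m), Finset.sum_comm]
    apply Finset.sum_congr rfl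
    intro l _
    apply Finset.sum_congr rfl
    intro k _
    simp only [smul_eq_C_mul]
    rw [pderiv_comm']
    ring
  -- claim 3
  have hC3 : (∑ i ∈ Finset.range (j + 1 + 1), ∑ l ∈ Finset.range E,
        ((l + 1 : ℕ) : ℝ) • (X (l + 1) * pderiv i (pderiv (j + 1 - i) (pderiv l Q)))) =
      ∑ m ∈ Finset.range E, ((m + 1 : ℕ) : ℝ) •
        (X (m + 1) * ∑ i ∈ Finset.range (j + 1 + 1),
          pderiv m (pderiv i (pderiv (j + 1 - i) Q))) := by
    have rhs_eq : ∀ m : ℕ, ((m + 1 : ℕ) : ℝ) •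
        (X (m + 1) * ∑ i ∈ Finset.range (j + 1 + 1),
          pderiv m (pderiv i (pderiv (j + 1 - i) Q))) =
        ∑ i ∈ Finset.range (j + 1 + 1), ((m + 1 : ℕ) : ℝ) •
          (X (m + 1) * pderiv m (pderiv i (pderiv (j + 1 - i) Q))) := by
      intro m
      rw [Finset.mul_sum, Finset.smul_sum]
    rw [Finset.sum_congr rfl (fun m _ => rhs_eq m), Finset.sum_comm]
    apply Finset.sum_congr rfl
    intro i _
    apply Finset.sum_congr rfl
    intro l _
    rw [pderiv_comm' (j + 1 - l) i Q, pderiv_comm' l i]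
  -- claim 4
  have hC4 : (∑ i ∈ Finset.range (j + 1 + 1),
        ((j + 1 - i : ℕ) : ℝ) • pderiv i (pderiv (j + 1 - i - 1) Q)) +
      (∑ i ∈ Finset.range (j + 1 + 1),
        (i : ℝ) • pderiv (j + 1 - i) (pderiv (i - 1) Q)) =
      ((j + 2 : ℕ) : ℝ) • ∑ i ∈ Finset.range (j + 1), pderiv i (pderiv (j - i) Q) := by
    have h1 : (∑ i ∈ Finset.range (j + 1 + 1),
          ((j + 1 - i : ℕ) : ℝ) • pderiv i (pderiv (j + 1 - i - 1) Q))
        = ∑ i ∈ Finset.range (j + 1), ((j + 1 - i : ℕ) : ℝ) • pderiv i (pderiv (j - i) Q) := by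
      rw [Finset.sum_range_succ, show j + 1 - (j + 1) = 0 by omega, Nat.cast_zero, zero_smul,
        add_zero]
      apply Finset.sum_congr rfl
      intro i _
      rw [show j + 1 - i - 1 = j - i by omega]
    have h2 : (∑ i ∈ Finset.range (j + 1 + 1),
          (i : ℝ) • pderiv (j + 1 - i) (pderiv (i - 1) Q))
        = ∑ i ∈ Finset.range (j + 1), ((i + 1 : ℕ) : ℝ) • pderiv i (pderiv (j - i) Q) := by
      rw [Finset.sum_range_succ']
      simp only [Nat.cast_zero, zero_smul, add_zero]
      apply Finset.sum_congr rfl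
      intro i _
      rw [show j + 1 - (i + 1) = j - i by omega, show i + 1 - 1 = i by omega,
        pderiv_comm' (j - i) i Q]
    rw [h1, h2, Finset.smul_sum, ← Finset.sum_add_distrib]
    apply Finset.sum_congr rfl
    intro i hi
    rw [← add_smul]
    congr 1
    have hij : i ≤ j := by
      have := Finset.mem_range.mp hi
      omega
    push_cast [Nat.cast_sub (by omega : i ≤ j + 1)]
    ring
  linear_combination hC1 + hC2 + hC3 + hC4

lemma tel (n : ℕ) (f : ℕ → MP) (h0 : f 0 = 0) (hn : f n = 0) :
    ∑ m ∈ Finset.range n, f (m + 1) = ∑ m ∈ Finset.range n, f m := by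
  have e := Finset.sum_range_succ' f n
  rw [Finset.sum_range_succ, h0, hn, add_zero, add_zero] at e
  exact e.symm

/-- `F̂_2 := [½Ŵ_0, F̂_1] = ∑_{k≥1} k t_k L̂_{k-1}`, where `F̂_1 = L̂_{-1}`. -/
theorem F2_eq (P : MvPolynomial ℕ ℝ) :
    (1 / 2 : ℝ) • (W0op (Lop (-1) P) - Lop (-1) (W0op P)) =
      ∑ᶠ k : ℕ, if 1 ≤ k then (k : ℝ) • (X k * Lop ((k : ℤ) - 1) P) else 0 := by
  obtain ⟨N, hP⟩ : ∃ N, Bnd P N := ⟨_, bnd_vars P⟩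
  have hBA : Bnd (Lop (-1) P) (N + 1) := hP.lop le_rfl
  have h1 : W0op (Lop (-1) P)
      = ∑ m ∈ Finset.range (2 * N + 3),
          ((m + 1 : ℕ) : ℝ) • (X (m + 1) * Lop ((m + 1 : ℕ) : ℤ) (Lop (-1) P)) := by
    rw [W0op_eq_sum hBA (M := 2 * N + 4) (by omega), sum_shift _ _ (by simp)]
    apply Finset.sum_congr rfl
    intro m _
    rw [if_pos (by omega)]
  have h2 : W0op P
      = ∑ m ∈ Finset.range (2 * N + 3),
          ((m + 1 : ℕ) : ℝ) • (X (m + 1) * Lop ((m + 1 : ℕ) : ℤ) P) := by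
    rw [W0op_eq_sum hP (M := 2 * N + 4) (by omega), sum_shift _ _ (by simp)]
    apply Finset.sum_congr rfl
    intro m _
    rw [if_pos (by omega)]
  have h3 : Lop (-1) (W0op P)
      = ∑ m ∈ Finset.range (2 * N + 3),
          (((m + 1 : ℕ) : ℝ) • (((m + 2 : ℕ) : ℝ) • (X (m + 2) * Lop ((m + 1 : ℕ) : ℤ) P))
            + ((m + 1 : ℕ) : ℝ) • (X (m + 1) * Lop (-1) (Lop ((m + 1 : ℕ) : ℤ) P))) := by
    rw [h2, Lop_neg_one_sum (N := 2 * N + 4) (fun m hm =>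
      (((hP.lop (by omega)).X_mul).smul _).mono
        (max_le (by simp only [Finset.mem_range] at hm; omega) (by omega)))]
    apply Finset.sum_congr rfl
    intro m _
    rw [Lop_neg_one_smul ((hP.lop (by omega)).X_mul),
      Lop_neg_one_X_mul (hP.lop (by omega)) m, smul_add]
  have h4 : ∀ m : ℕ,
      ((m + 1 : ℕ) : ℝ) • (X (m + 1) * Lop ((m + 1 : ℕ) : ℤ) (Lop (-1) P))
        - ((m + 1 : ℕ) : ℝ) • (X (m + 1) * Lop (-1) (Lop ((m + 1 : ℕ) : ℤ) P))
      = ((m + 1 : ℕ) : ℝ) • (X (m + 1) * (((m + 2 : ℕ) : ℝ) • Lop ((m : ℕ) : ℤ) P)) := by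
    intro m
    rw [← smul_sub, ← mul_sub, comm_lemma hP m]
  have key : W0op (Lop (-1) P) - Lop (-1) (W0op P)
      = (∑ m ∈ Finset.range (2 * N + 3),
          ((m + 1 : ℕ) : ℝ) • (X (m + 1) * (((m + 2 : ℕ) : ℝ) • Lop ((m : ℕ) : ℤ) P)))
        - ∑ m ∈ Finset.range (2 * N + 3),
          ((m + 1 : ℕ) : ℝ) • (((m + 2 : ℕ) : ℝ) • (X (m + 2) * Lop ((m + 1 : ℕ) : ℤ) P)) := by
    rw [h1, h3, Finset.sum_add_distrib, sub_add_eq_sub_sub, sub_right_comm,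
      ← Finset.sum_sub_distrib, Finset.sum_congr rfl (fun m _ => h4 m)]
  have hv : ∀ m : ℕ,
      ((m + 1 : ℕ) : ℝ) • (((m + 2 : ℕ) : ℝ) • (X (m + 2) * Lop ((m + 1 : ℕ) : ℤ) P))
        = (((m + 1 : ℕ) : ℝ) * ((m + 2 : ℕ) : ℝ)) • (X (m + 2) * Lop ((m + 1 : ℕ) : ℤ) P) := by
    intro m
    rw [smul_smul]
  have htel : ∑ m ∈ Finset.range (2 * N + 3),
        (((m + 1 : ℕ) : ℝ) * ((m + 2 : ℕ) : ℝ)) • (X (m + 2) * Lop ((m + 1 : ℕ) : ℤ) P)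
      = ∑ m ∈ Finset.range (2 * N + 3),
        (((m : ℕ) : ℝ) * ((m + 1 : ℕ) : ℝ)) • (X (m + 1) * Lop ((m : ℕ) : ℤ) P) :=
    tel (2 * N + 3) (fun m => (((m : ℕ) : ℝ) * ((m + 1 : ℕ) : ℝ)) •
        (X (m + 1) * Lop ((m : ℕ) : ℤ) P))
      (by norm_num)
      (by
        show (((2 * N + 3 : ℕ) : ℝ) * ((2 * N + 3 + 1 : ℕ) : ℝ)) •
            (X (2 * N + 3 + 1) * Lop ((2 * N + 3 : ℕ) : ℤ) P) = 0
        rw [Lop_nat_zero (2 * N + 3) hP (by omega), mul_zero, smul_zero])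
  have hR : (∑ᶠ k : ℕ, if 1 ≤ k then (k : ℝ) • (X k * Lop ((k : ℤ) - 1) P) else 0)
      = ∑ m ∈ Finset.range (2 * N + 3),
          ((m + 1 : ℕ) : ℝ) • (X (m + 1) * Lop ((m : ℕ) : ℤ) P) := by
    rw [finsum_eq_finset_sum_of_support_subset _ (s := Finset.range (2 * N + 4)) ?hsupp]
    case hsupp =>
      rw [Function.support_subset_iff']
      intro k hk
      simp only [Finset.coe_range, Set.mem_Iio, not_lt] at hk
      rw [if_pos (by omega), show (k : ℤ) - 1 = ((k - 1 : ℕ) : ℤ) by omega,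
        Lop_nat_zero (k - 1) hP (by omega), mul_zero, smul_zero]
    rw [sum_shift _ _ (by simp)]
    apply Finset.sum_congr rfl
    intro m _
    rw [if_pos (by omega), show ((m + 1 : ℕ) : ℤ) - 1 = ((m : ℕ) : ℤ) by omega]
  rw [key, Finset.sum_congr rfl (fun m _ => hv m), htel, hR, ← Finset.sum_sub_distrib,
    Finset.smul_sum]
  apply Finset.sum_congr rfl
  intro m _
  simp only [mul_smul_comm, smul_smul, ← sub_smul]
  congr 1
  push_cast
  ring
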